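/- Let (B_j)_{j≥1} be a sequence of independent standard Brownian motions started at 0, and let (α_j^n)_{j,n≥1} be nonnegative real numbers such that for every j ≥ 1, α_j^n → ∞ as n → ∞. For each n, j define the Ornstein–Uhlenbeck process ξ_j^n pathwise by ξ_j^n(t) := B_j(t) − α_j^n ∫_0^t e^{−α_j^n (t−s)} B_j(s) ds for 0 ≤ t ≤ n, and ξ_j^n(t) := ξ_j^n(n) + B_j(t) − B_j(n) for t ≥ n (this is the strong solution of dξ = −α_j^n 1_{t≤n} ξ dt + dB_j, ξ(0) = 0). Then the sequence ξ^n := (ξ_j^n)_{j≥1} converges in distribution to 0 in the countable product space C([0,∞),ℝ)^ℕ. -/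

import Mathlib

open MeasureTheory ProbabilityTheory Filter Topology
open scoped NNReal

/-- A standard Brownian motion started at `0`: continuous paths starting at `0`,
independent increments, increments over `[s,t]` centered Gaussian of variance `t − s`. -/
structure IsStandardBM {Ω : Type*} [MeasurableSpace Ω] (P : Measure Ω)
    (w : ℝ≥0 → Ω → ℝ) : Prop where
  start : ∀ ω, w 0 ω = 0
  cont : ∀ ω, Continuous fun t => w t ω
  meas : ∀ t, Measurable (w t)
  indep : ∀ (n : ℕ) (t : Fin (n + 1) → ℝ≥0), Monotone t →
    iIndepFun
      (fun i : Fin n => fun ω => w (t i.succ) ω - w (t i.castSucc) ω) P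
  gauss : ∀ s t : ℝ≥0, s ≤ t →
    P.map (fun ω => w t ω - w s ω) = gaussianReal 0 (t - s)

/-- The pathwise Ornstein–Uhlenbeck transform: the strong solution of
`dξ = −α 1_{t ≤ T} ξ dt + db`, `ξ(0)=0`, namely
`ξ(t) = b(t) − α ∫_0^{t∧T} e^{−α((t∧T)−s)} b(s) ds`
(which agrees with `b(t) − α∫_0^t e^{−α(t−s)} b(s) ds` for `t ≤ T` and with
`ξ(T) + b(t) − b(T)` for `t ≥ T`). -/
noncomputable def ouPath (α T : ℝ) (b : ℝ≥0 → ℝ) (t : ℝ≥0) : ℝ :=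
  b t - α * ∫ s in (0 : ℝ)..(min (t : ℝ) T),
    Real.exp (-α * (min (t : ℝ) T - s)) * b s.toNNReal

/-- Pathwise: the OU transform tends to 0 uniformly on compacts as `α → ∞`. -/
lemma ou_unif (b : ℝ≥0 → ℝ) (hb : Continuous b) (hb0 : b 0 = 0)
    (a : ℕ → ℝ) (ha0 : ∀ n, 0 ≤ a n) (ha : Tendsto a atTop atTop) (T₀ : ℝ≥0) :
    TendstoUniformlyOn (fun n (t : ℝ≥0) => ouPath (a n) n b t) (fun _ => 0) atTop
      (Set.Icc 0 T₀) := by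
  rw [Metric.tendstoUniformlyOn_iff]
  intro ε hε
  set c : ℝ → ℝ := fun s => b s.toNNReal with hc
  have hcc : Continuous c := hb.comp continuous_real_toNNReal
  have hc0 : c 0 = 0 := by simpa [c] using hb0
  set ε' := ε / 5 with hε'
  have hε'pos : 0 < ε' := by positivity
  have hK : IsCompact (Set.Icc (0 : ℝ) T₀) := isCompact_Icc
  have huc := hK.uniformContinuousOn_of_continuous hcc.continuousOn
  rw [Metric.uniformContinuousOn_iff] at huc
  obtain ⟨δ, hδpos, hδ⟩ := huc ε' hε'pos
  obtain ⟨M, hM⟩ := hK.exists_bound_of_continuousOn hcc.continuousOn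
  have hM0 : 0 ≤ M := le_trans (norm_nonneg _) (hM 0 ⟨le_rfl, T₀.coe_nonneg⟩)
  have h1 : ∀ᶠ n : ℕ in atTop, (T₀ : ℝ) ≤ n :=
    tendsto_natCast_atTop_atTop.eventually_ge_atTop (T₀ : ℝ)
  have h2 : Tendsto (fun n => M * Real.exp (-(a n) * (δ / 2))) atTop (𝓝 0) := by
    have hbot : Tendsto (fun n => -(a n) * (δ / 2)) atTop atBot := by
      apply Tendsto.atBot_mul_const (by positivity)
      exact tendsto_neg_atBot_iff.mpr ha
    simpa using (Real.tendsto_exp_atBot.comp hbot).const_mul M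
  have h2' : ∀ᶠ n in atTop, M * Real.exp (-(a n) * (δ / 2)) < ε' :=
    h2.eventually (gt_mem_nhds hε'pos)
  filter_upwards [h1, h2'] with n hn1 hn2
  intro t ht
  set A := a n with hA
  have hApos : 0 ≤ A := ha0 n
  set τ := (t : ℝ) with hτ
  have hτ0 : (0 : ℝ) ≤ τ := t.coe_nonneg
  have hτT : τ ≤ (T₀ : ℝ) := by exact_mod_cast ht.2
  have hmin : min τ (n : ℝ) = τ := min_eq_left (le_trans hτT hn1)
  have hbt : b t = c τ := by simp [c, hτ]
  -- continuity of the exponential weight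
  have hcontE : Continuous fun s : ℝ => Real.exp (-A * (τ - s)) :=
    Real.continuous_exp.comp (continuous_const.mul (continuous_const.sub continuous_id))
  -- the basic integral computation
  have hJ : ∀ u v : ℝ, ∫ s in u..v, A * Real.exp (-A * (τ - s))
      = Real.exp (-A * (τ - v)) - Real.exp (-A * (τ - u)) := by
    intro u v
    have hder : ∀ s ∈ Set.uIcc u v, HasDerivAt (fun s => Real.exp (-A * (τ - s)))
        (A * Real.exp (-A * (τ - s))) s := by
      intro s _
      have h1 : HasDerivAt (fun s : ℝ => -A * (τ - s)) A s := by
        simpa using ((hasDerivAt_id s).const_sub τ).const_mul (-A)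
      have := h1.exp
      simpa [mul_comm] using this
    rw [intervalIntegral.integral_eq_sub_of_hasDerivAt hder
      ((continuous_const.mul hcontE).intervalIntegrable u v)]
  -- helper bound
  have hIb : ∀ u v C : ℝ, 0 ≤ u → u ≤ v → v ≤ τ → 0 ≤ C →
      (∀ s ∈ Set.Icc u v, |c τ - c s| ≤ C) →
      |∫ s in u..v, A * Real.exp (-A * (τ - s)) * (c τ - c s)|
        ≤ C * Real.exp (-A * (τ - v)) := by
    intro u v C hu huv hvτ hC hbd
    have hint1 : IntervalIntegrable (fun s => |A * Real.exp (-A * (τ - s)) * (c τ - c s)|)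
        volume u v :=
      (((continuous_const.mul hcontE).mul (continuous_const.sub hcc)).abs).intervalIntegrable u v
    have hint2 : IntervalIntegrable (fun s => A * Real.exp (-A * (τ - s)) * C) volume u v :=
      ((continuous_const.mul hcontE).mul continuous_const).intervalIntegrable u v
    calc |∫ s in u..v, A * Real.exp (-A * (τ - s)) * (c τ - c s)|
        ≤ ∫ s in u..v, |A * Real.exp (-A * (τ - s)) * (c τ - c s)| :=
          intervalIntegral.abs_integral_le_integral_abs huv
      _ ≤ ∫ s in u..v, A * Real.exp (-A * (τ - s)) * C := by
          apply intervalIntegral.integral_mono_on huv hint1 hint2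
          intro s hs
          have hnn : 0 ≤ A * Real.exp (-A * (τ - s)) :=
            mul_nonneg hApos (Real.exp_nonneg _)
          rw [abs_mul, abs_of_nonneg hnn]
          exact mul_le_mul_of_nonneg_left (hbd s hs) hnn
      _ = C * ∫ s in u..v, A * Real.exp (-A * (τ - s)) := by
          rw [← intervalIntegral.integral_const_mul]
          apply intervalIntegral.integral_congr
          intro s _
          ring
      _ = C * (Real.exp (-A * (τ - v)) - Real.exp (-A * (τ - u))) := by rw [hJ]
      _ ≤ C * Real.exp (-A * (τ - v)) :=
          mul_le_mul_of_nonneg_left (sub_le_self _ (Real.exp_nonneg _)) hC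
  -- the decomposition
  have hdecomp : c τ - A * ∫ s in (0:ℝ)..τ, Real.exp (-A * (τ - s)) * c s
      = c τ * Real.exp (-A * τ)
        + ∫ s in (0:ℝ)..τ, A * Real.exp (-A * (τ - s)) * (c τ - c s) := by
    have e1 : ∫ s in (0:ℝ)..τ, A * Real.exp (-A * (τ - s)) * (c τ - c s)
        = c τ * (∫ s in (0:ℝ)..τ, A * Real.exp (-A * (τ - s)))
          - A * ∫ s in (0:ℝ)..τ, Real.exp (-A * (τ - s)) * c s := by
      calc ∫ s in (0:ℝ)..τ, A * Real.exp (-A * (τ - s)) * (c τ - c s)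
          = ∫ s in (0:ℝ)..τ, (c τ * (A * Real.exp (-A * (τ - s)))
              - A * (Real.exp (-A * (τ - s)) * c s)) := by
            apply intervalIntegral.integral_congr
            intro s _
            ring
        _ = (∫ s in (0:ℝ)..τ, c τ * (A * Real.exp (-A * (τ - s))))
            - ∫ s in (0:ℝ)..τ, A * (Real.exp (-A * (τ - s)) * c s) :=
            intervalIntegral.integral_sub
              ((continuous_const.mul (continuous_const.mul hcontE)).intervalIntegrable 0 τ)
              ((continuous_const.mul (hcontE.mul hcc)).intervalIntegrable 0 τ)
        _ = c τ * (∫ s in (0:ℝ)..τ, A * Real.exp (-A * (τ - s)))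
            - A * ∫ s in (0:ℝ)..τ, Real.exp (-A * (τ - s)) * c s := by
            congr 1
            · exact intervalIntegral.integral_const_mul _ _
            · exact intervalIntegral.integral_const_mul _ _
    rw [e1, hJ 0 τ]
    have h0 : Real.exp (-A * (τ - 0)) = Real.exp (-A * τ) := by ring_nf
    have h1 : Real.exp (-A * (τ - τ)) = 1 := by simp
    rw [h0, h1]
    ring
  -- put together
  have key : |c τ - A * ∫ s in (0:ℝ)..τ, Real.exp (-A * (τ - s)) * c s| < ε := by
    rw [hdecomp]
    have hmem : ∀ s : ℝ, 0 ≤ s → s ≤ τ → s ∈ Set.Icc (0:ℝ) (T₀:ℝ) :=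
      fun s h1 h2 => ⟨h1, le_trans h2 hτT⟩
    have hτmem : τ ∈ Set.Icc (0:ℝ) (T₀:ℝ) := ⟨hτ0, hτT⟩
    rcases le_or_gt τ (δ / 2) with hcase | hcase
    · -- small time
      have hclose : ∀ s ∈ Set.Icc (0:ℝ) τ, |c τ - c s| ≤ ε' := by
        intro s hs
        have := hδ τ hτmem s (hmem s hs.1 hs.2)
          (by rw [Real.dist_eq]; rw [abs_of_nonneg (by linarith [hs.2] : 0 ≤ τ - s)];
              linarith [hs.1])
        rw [Real.dist_eq] at this
        exact this.le
      have h1' : |c τ * Real.exp (-A * τ)| ≤ ε' := by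
        rw [abs_mul, abs_of_nonneg (Real.exp_nonneg _)]
        have hcτ : |c τ| ≤ ε' := by
          have := hδ τ hτmem 0 ⟨le_rfl, T₀.coe_nonneg⟩
            (by rw [Real.dist_eq, sub_zero, abs_of_nonneg hτ0]; linarith)
          rw [Real.dist_eq, hc0, sub_zero] at this
          exact this.le
        calc |c τ| * Real.exp (-A * τ) ≤ ε' * 1 := by
              apply mul_le_mul hcτ _ (Real.exp_nonneg _) hε'pos.le
              exact Real.exp_le_one_iff.mpr (by nlinarith)
          _ = ε' := mul_one _
      have h2'' := hIb 0 τ ε' le_rfl hτ0 le_rfl hε'pos.le hclose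
      have h2''' : |∫ s in (0:ℝ)..τ, A * Real.exp (-A * (τ - s)) * (c τ - c s)| ≤ ε' := by
        calc _ ≤ ε' * Real.exp (-A * (τ - τ)) := h2''
          _ = ε' := by simp
      calc |c τ * Real.exp (-A * τ) + ∫ s in (0:ℝ)..τ, A * Real.exp (-A * (τ - s)) * (c τ - c s)|
          ≤ |c τ * Real.exp (-A * τ)|
            + |∫ s in (0:ℝ)..τ, A * Real.exp (-A * (τ - s)) * (c τ - c s)| := abs_add_le _ _
        _ ≤ ε' + ε' := add_le_add h1' h2'''
        _ < ε := by rw [hε']; linarith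
    · -- large time: split at x = τ - δ/2
      set x := τ - δ / 2 with hx
      have hx0 : 0 ≤ x := by simp [hx]; linarith
      have hxτ : x ≤ τ := by simp [hx]; linarith
      have hsplit : ∫ s in (0:ℝ)..τ, A * Real.exp (-A * (τ - s)) * (c τ - c s)
          = (∫ s in (0:ℝ)..x, A * Real.exp (-A * (τ - s)) * (c τ - c s))
            + ∫ s in x..τ, A * Real.exp (-A * (τ - s)) * (c τ - c s) := by
        rw [intervalIntegral.integral_add_adjacent_intervals
          (f := fun s => A * Real.exp (-A * (τ - s)) * (c τ - c s))
          (((continuous_const.mul hcontE).mul (continuous_const.sub hcc)).intervalIntegrable 0 x)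
          (((continuous_const.mul hcontE).mul (continuous_const.sub hcc)).intervalIntegrable x τ)]
      have hfar : |∫ s in (0:ℝ)..x, A * Real.exp (-A * (τ - s)) * (c τ - c s)|
          ≤ 2 * M * Real.exp (-A * (δ / 2)) := by
        have := hIb 0 x (2 * M) le_rfl hx0 hxτ (by linarith) ?_
        · calc _ ≤ (2 * M) * Real.exp (-A * (τ - x)) := this
            _ = 2 * M * Real.exp (-A * (δ / 2)) := by rw [hx]; ring_nf
        · intro s hs
          have hs1 := hM s (hmem s hs.1 (le_trans hs.2 hxτ))
          have hs2 := hM τ hτmem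
          rw [Real.norm_eq_abs] at hs1 hs2
          calc |c τ - c s| ≤ |c τ| + |c s| := abs_sub _ _
            _ ≤ 2 * M := by linarith
      have hnear : |∫ s in x..τ, A * Real.exp (-A * (τ - s)) * (c τ - c s)| ≤ ε' := by
        have := hIb x τ ε' hx0 hxτ le_rfl hε'pos.le ?_
        · calc _ ≤ ε' * Real.exp (-A * (τ - τ)) := this
            _ = ε' := by simp
        · intro s hs
          have := hδ τ hτmem s (hmem s (le_trans hx0 hs.1) hs.2)
            (by rw [Real.dist_eq, abs_of_nonneg (by linarith [hs.2] : 0 ≤ τ - s)]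
                have : x ≤ s := hs.1
                rw [hx] at this; linarith)
          rw [Real.dist_eq] at this
          exact this.le
      have h1' : |c τ * Real.exp (-A * τ)| ≤ M * Real.exp (-A * (δ / 2)) := by
        rw [abs_mul, abs_of_nonneg (Real.exp_nonneg _)]
        have hcτ : |c τ| ≤ M := by
          have := hM τ hτmem; rwa [Real.norm_eq_abs] at this
        apply mul_le_mul hcτ _ (Real.exp_nonneg _) hM0
        exact Real.exp_le_exp.mpr (by nlinarith)
      have hMδ : M * Real.exp (-A * (δ / 2)) < ε' := hn2
      calc |c τ * Real.exp (-A * τ) + ∫ s in (0:ℝ)..τ, A * Real.exp (-A * (τ - s)) * (c τ - c s)|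
          ≤ |c τ * Real.exp (-A * τ)|
            + |∫ s in (0:ℝ)..τ, A * Real.exp (-A * (τ - s)) * (c τ - c s)| := abs_add_le _ _
        _ ≤ M * Real.exp (-A * (δ / 2)) + (2 * M * Real.exp (-A * (δ / 2)) + ε') := by
            apply add_le_add h1'
            rw [hsplit]
            calc _ ≤ _ := abs_add_le _ _
              _ ≤ _ := add_le_add hfar hnear
        _ < ε' + (2 * ε' + ε') := by
            have h2M : 2 * M * Real.exp (-A * (δ / 2)) ≤ 2 * ε' := by nlinarith
            exact add_lt_add_of_lt_of_le hMδ (add_le_add h2M le_rfl)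
        _ ≤ ε := by rw [hε']; linarith
  rw [Real.dist_eq]
  rw [show (0:ℝ) - ouPath A n b t = -(ouPath A n b t) by ring, abs_neg]
  unfold ouPath
  rw [hmin, hbt]
  exact key

open Set in
lemma measurable_cm_of_eval {Ω : Type*} [MeasurableSpace Ω]
    {mC : MeasurableSpace C(ℝ≥0, ℝ)} (hmC : mC = borel C(ℝ≥0, ℝ))
    {g : Ω → C(ℝ≥0, ℝ)} (h : ∀ t : ℝ≥0, Measurable fun ω => g ω t) :
    Measurable g := by
  subst hmC
  have htop : (ContinuousMap.compactOpen : TopologicalSpace C(ℝ≥0, ℝ))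
      = TopologicalSpace.generateFrom
        (Set.image2 (fun (K : Set ℝ≥0) (t : Set (Set ℝ)) =>
            {f : C(ℝ≥0, ℝ) | Set.MapsTo f K (⋃₀ t)})
          {K : Set ℝ≥0 | IsCompact K} {t : Set (Set ℝ) | t.Finite ∧ t ⊆ {U | IsOpen U}}) := by
    apply ContinuousMap.compactOpen_eq_generateFrom
    · exact fun K hK => hK
    · exact TopologicalSpace.isTopologicalBasis_opens
    · intro f x V hV hfx
      have hV' : IsOpen V := hV
      obtain ⟨K, hKmem, hKsub, hKcomp⟩ :=
        local_compact_nhds (f.continuous.continuousAt.preimage_mem_nhds (hV'.mem_nhds hfx))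
      exact ⟨K, hKcomp, hKmem, fun y hy => hKsub hy⟩
  rw [borel_eq_generateFrom_of_subbasis htop]
  apply measurable_generateFrom
  rintro s ⟨K, hK, t, ⟨-, htT⟩, rfl⟩
  set U : Set ℝ := ⋃₀ t with hUdef
  have hU : IsOpen U := isOpen_sUnion fun V hV => htT hV
  rcases eq_or_ne U univ with hUuniv | hUne
  · have he : {f : C(ℝ≥0, ℝ) | MapsTo f K U} = univ := by
      ext f; simp [hUuniv, MapsTo]
    rw [show g ⁻¹' {f : C(ℝ≥0, ℝ) | MapsTo f K U} = univ by rw [he]; exact preimage_univ]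
    exact MeasurableSet.univ
  · have hUc : Uᶜ.Nonempty := nonempty_compl.mpr hUne
    have hUcc : closure Uᶜ = Uᶜ := (isClosed_compl_iff.mpr hU).closure_eq
    -- countable dense subset of K
    obtain ⟨s₀, hs₀c, hs₀d⟩ := TopologicalSpace.exists_countable_dense K
    set D : Set ℝ≥0 := Subtype.val '' s₀ with hDdef
    have hD : D ⊆ K := by rintro _ ⟨⟨x, hx⟩, -, rfl⟩; exact hx
    have hDc : D.Countable := hs₀c.image _
    have hdense : ∀ x ∈ K, x ∈ closure D := by
      intro x hx
      have h1 : (⟨x, hx⟩ : K) ∈ closure s₀ := by rw [hs₀d.closure_eq]; trivial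
      exact image_closure_subset_closure_image continuous_subtype_val ⟨⟨x, hx⟩, h1, rfl⟩
    have key : ∀ f : C(ℝ≥0, ℝ), MapsTo f K U ↔
        ∃ m : ℕ, ∀ x ∈ D, (1 : ℝ) / (m + 1) ≤ Metric.infDist (f x) Uᶜ := by
      intro f
      constructor
      · intro hf
        rcases K.eq_empty_or_nonempty with hKe | hKn
        · exact ⟨0, fun x hx => absurd (hD hx) (by simp [hKe])⟩
        · obtain ⟨x₀, hx₀K, hmin⟩ := hK.exists_isMinOn hKn
            (((Metric.continuous_infDist_pt Uᶜ).comp f.continuous).continuousOn)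
          have hy₀pos : 0 < Metric.infDist (f x₀) Uᶜ := by
            rcases (Metric.infDist_nonneg (s := Uᶜ) (x := f x₀)).lt_or_eq with hlt | heq
            · exact hlt
            · exfalso
              have hcl : f x₀ ∈ closure Uᶜ :=
                (Metric.mem_closure_iff_infDist_zero hUc).mpr heq.symm
              rw [hUcc] at hcl
              exact hcl (hf hx₀K)
          obtain ⟨m, hm⟩ := exists_nat_one_div_lt hy₀pos
          refine ⟨m, fun x hx => ?_⟩
          have h2 : Metric.infDist (f x₀) Uᶜ ≤ Metric.infDist (f x) Uᶜ :=
            isMinOn_iff.mp hmin x (hD hx)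
          have : (1 : ℝ) / (m + 1) < Metric.infDist (f x₀) Uᶜ := by exact_mod_cast hm
          linarith
      · rintro ⟨m, hm⟩ x hx
        have hcl : IsClosed {z : ℝ≥0 | (1 : ℝ) / (m + 1) ≤ Metric.infDist (f z) Uᶜ} :=
          isClosed_le continuous_const ((Metric.continuous_infDist_pt Uᶜ).comp f.continuous)
        have hxin : x ∈ {z : ℝ≥0 | (1 : ℝ) / (m + 1) ≤ Metric.infDist (f z) Uᶜ} :=
          closure_minimal hm hcl (hdense x hx)
        have hpos : 0 < Metric.infDist (f x) Uᶜ := by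
          have : (0 : ℝ) < 1 / (m + 1) := by positivity
          exact lt_of_lt_of_le this hxin
        by_contra hmem
        have : f x ∈ Uᶜ := hmem
        rw [Metric.infDist_zero_of_mem this] at hpos
        exact lt_irrefl _ hpos
    have hset : g ⁻¹' {f : C(ℝ≥0, ℝ) | MapsTo f K U}
        = ⋃ m : ℕ, ⋂ x ∈ D, {ω | (1 : ℝ) / (m + 1) ≤ Metric.infDist (g ω x) Uᶜ} := by
      ext ω
      simp only [mem_preimage, mem_setOf_eq, key, mem_iUnion, mem_iInter]
    rw [hset]
    apply MeasurableSet.iUnion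
    intro m
    apply MeasurableSet.biInter hDc
    intro x _
    exact measurableSet_le measurable_const
      ((Metric.continuous_infDist_pt Uᶜ).measurable.comp (h x))

lemma measurable_ouPath_eval {Ω : Type*} [MeasurableSpace Ω] (A T : ℝ) (hT : 0 ≤ T)
    (b : ℝ≥0 → Ω → ℝ) (hbc : ∀ ω, Continuous fun u => b u ω) (hbm : ∀ u, Measurable (b u))
    (t : ℝ≥0) : Measurable fun ω => ouPath A T (fun u => b u ω) t := by
  unfold ouPath
  set m := min (t : ℝ) T with hmdef
  have hm : 0 ≤ m := le_min t.coe_nonneg hT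
  have hu : Measurable (Function.uncurry fun (s : ℝ) (ω : Ω) => b s.toNNReal ω) :=
    measurable_uncurry_of_continuous_of_measurable
      (fun ω => (hbc ω).comp continuous_real_toNNReal) (fun s => hbm s.toNNReal)
  have hG : Measurable fun p : Ω × ℝ => Real.exp (-A * (m - p.2)) * b p.2.toNNReal p.1 := by
    apply Measurable.mul
    · have : Measurable fun p : Ω × ℝ => p.2 := measurable_snd
      exact (Real.measurable_exp.comp ((measurable_const.sub this).const_mul (-A)))
    · exact hu.comp measurable_swap
  have hint : Measurable fun ω =>
      ∫ s in Set.Ioc (0 : ℝ) m, Real.exp (-A * (m - s)) * b s.toNNReal ω :=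
    (hG.stronglyMeasurable.integral_prod_right').measurable
  apply (hbm t).sub
  apply measurable_const.mul
  have heq : (fun ω => ∫ s in (0 : ℝ)..m, Real.exp (-A * (m - s)) * b s.toNNReal ω)
      = fun ω => ∫ s in Set.Ioc (0 : ℝ) m, Real.exp (-A * (m - s)) * b s.toNNReal ω := by
    funext ω
    rw [intervalIntegral.integral_of_le hm]
  rw [heq]
  exact hint

/-- For independent standard Brownian motions `(B_j)` and nonnegative
reals `α_j^n` with `α_j^n → ∞` as `n → ∞` for every `j`, the sequence of
Ornstein–Uhlenbeck processes `ξⁿ = (ξ_j^n)_j` converges in distribution to `0` in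
`C([0,∞),ℝ)^ℕ`. -/
theorem stmt16 {Ω : Type*} [MeasurableSpace Ω] (P : Measure Ω) [IsProbabilityMeasure P]
    (B : ℕ → ℝ≥0 → Ω → ℝ) (hBM : ∀ j, IsStandardBM P (B j))
    (hBindep : iIndepFun (fun j => fun ω => fun t => B j t ω) P)
    (α : ℕ → ℕ → ℝ) (hαnn : ∀ j n, 0 ≤ α j n)
    (hα : ∀ j, Tendsto (fun n => α j n) atTop atTop)
    (ξ : ℕ → Ω → ℕ → C(ℝ≥0, ℝ))
    (hξ : ∀ n ω j (t : ℝ≥0), ξ n ω j t = ouPath (α j n) (n : ℝ) (fun s => B j s ω) t) :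
    ∀ F : BoundedContinuousFunction (ℕ → C(ℝ≥0, ℝ)) ℝ,
      Tendsto (fun n => ∫ ω, F (ξ n ω) ∂P) atTop (𝓝 (F 0)) := by
  intro F
  letI mC : MeasurableSpace C(ℝ≥0, ℝ) := borel _
  haveI : BorelSpace C(ℝ≥0, ℝ) := ⟨rfl⟩
  have hmeas : ∀ n, Measurable (ξ n) := by
    intro n
    apply measurable_pi_lambda
    intro j
    apply measurable_cm_of_eval rfl
    intro t
    have heq : (fun ω => ξ n ω j t)
        = fun ω => ouPath (α j n) (n : ℝ) (fun s => B j s ω) t := by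
      funext ω
      exact hξ n ω j t
    rw [heq]
    exact measurable_ouPath_eval (α j n) (n : ℝ) (Nat.cast_nonneg n) (B j)
      (fun ω => (hBM j).cont ω) (fun u => (hBM j).meas u) t
  have hFm : ∀ n, AEStronglyMeasurable (fun ω => F (ξ n ω)) P := fun n =>
    (F.continuous.measurable.comp (hmeas n)).aestronglyMeasurable
  have hlim : ∀ ω, Tendsto (fun n => F (ξ n ω)) atTop (𝓝 (F 0)) := by
    intro ω
    apply (F.continuous.tendsto 0).comp
    rw [tendsto_pi_nhds]
    intro j
    rw [show (0 : ℕ → C(ℝ≥0, ℝ)) j = 0 from rfl]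
    rw [ContinuousMap.tendsto_iff_forall_isCompact_tendstoUniformlyOn]
    intro K hK
    obtain ⟨T₀, hT₀⟩ := hK.bddAbove
    have hsub : K ⊆ Set.Icc 0 T₀ := fun x hx => ⟨zero_le, hT₀ hx⟩
    have heq : (fun n (t : ℝ≥0) => (ξ n ω j) t)
        = fun n t => ouPath (α j n) (n : ℝ) (fun s => B j s ω) t := by
      funext n t
      exact hξ n ω j t
    have h0 : ⇑(0 : C(ℝ≥0, ℝ)) = fun _ : ℝ≥0 => (0 : ℝ) := rfl
    rw [heq, h0]
    exact (ou_unif (fun s => B j s ω) ((hBM j).cont ω) ((hBM j).start ω)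
      (fun n => α j n) (fun n => hαnn j n) (hα j) T₀).mono hsub
  have hDCT := tendsto_integral_of_dominated_convergence (μ := P)
    (F := fun n ω => F (ξ n ω)) (f := fun _ω => F 0) (fun _ => ‖F‖) hFm
    (integrable_const _)
    (fun n => Eventually.of_forall fun ω => F.norm_coe_le_norm _)
    (Eventually.of_forall hlim)
  simpa using hDCT
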